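/- Let G be a graph on n > 10 vertices whose complement has edge density p ≤ 1/10 and maximum degree Δ̄. If v₁ is a nonnegative unit eigenvector of the adjacency matrix corresponding to the largest eigenvalue, then for every vertex i: (1 − 3Δ̄/n)/√n ≤ v₁(i) ≤ (1 + 2p + 2/n)/√n. -/

import Mathlib

open Finset SimpleGraph

private lemma rayleigh_le_aux {n : ℕ} (hn : 0 < n) (A : Matrix (Fin n) (Fin n) ℝ)
    (hA : A.IsHermitian) (lam1 : ℝ)
    (hmax : ∀ (μ : ℝ) (v : Fin n → ℝ), v ≠ 0 → A.mulVec v = μ • v → μ ≤ lam1)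
    (C : ℝ) (hbd : ∀ x : Fin n → ℝ, (∑ i, A.mulVec x i * x i) ≤ C * ∑ i, x i ^ 2) :
    ∀ x : Fin n → ℝ, ∑ i, A.mulVec x i * x i ≤ lam1 * ∑ i, x i ^ 2 := by
  haveI : Nonempty (Fin n) := ⟨⟨0, hn⟩⟩
  haveI : Nontrivial (EuclideanSpace ℝ (Fin n)) := (WithLp.linearEquiv 2 ℝ (Fin n → ℝ)).toEquiv.nontrivial
  set T : EuclideanSpace ℝ (Fin n) →ₗ[ℝ] EuclideanSpace ℝ (Fin n) := Matrix.toEuclideanLin A with hT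
  have hsym : T.IsSymmetric := Matrix.isHermitian_iff_isSymmetric.mp hA
  have hinner : ∀ x : EuclideanSpace ℝ (Fin n),
      (inner ℝ (T x) x : ℝ) = ∑ i, A.mulVec (fun j => x j) i * x i := by
    intro x
    simp only [hT, PiLp.inner_apply, Matrix.toEuclideanLin_apply, RCLike.inner_apply,
      conj_trivial]
    exact Finset.sum_congr rfl fun _ _ => mul_comm _ _
  have hnorm : ∀ x : EuclideanSpace ℝ (Fin n), ‖x‖ ^ 2 = ∑ i, x i ^ 2 := by
    intro x
    rw [EuclideanSpace.norm_eq, Real.sq_sqrt (by positivity)]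
    simp [sq_abs]
  have hev := hsym.hasEigenvalue_iSup_of_finiteDimensional
  obtain ⟨w, hw⟩ := hev.exists_hasEigenvector
  set μ : ℝ := (⨆ x : { x : EuclideanSpace ℝ (Fin n) // x ≠ 0 },
      RCLike.re (inner ℝ (T x) (x : EuclideanSpace ℝ (Fin n)) : ℝ) / ‖(x : EuclideanSpace ℝ (Fin n))‖ ^ 2) with hμ
  have hTw : T w = μ • w := Module.End.mem_eigenspace_iff.mp hw.1
  have hwne : (fun j => w j : Fin n → ℝ) ≠ 0 := by
    intro h
    exact hw.2 (WithLp.ofLp_injective 2 (funext fun j => congrFun h j))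
  have hμle : μ ≤ lam1 := by
    refine hmax μ (fun j => w j) hwne ?_
    funext i
    have := congrFun (congrArg (fun z : EuclideanSpace ℝ (Fin n) => (z : Fin n → ℝ)) hTw) i
    simpa [hT, Matrix.toEuclideanLin_apply] using this
  have hbdd : BddAbove (Set.range fun x : { x : EuclideanSpace ℝ (Fin n) // x ≠ 0 } =>
      RCLike.re (inner ℝ (T x) (x : EuclideanSpace ℝ (Fin n)) : ℝ) / ‖(x : EuclideanSpace ℝ (Fin n))‖ ^ 2) := by
    refine ⟨C, ?_⟩
    rintro y ⟨⟨x, hx⟩, rfl⟩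
    have hx2 : (0:ℝ) < ‖x‖ ^ 2 := pow_pos (norm_pos_iff.mpr hx) 2
    dsimp only
    rw [RCLike.re_to_real, div_le_iff₀ hx2, hinner, hnorm]
    exact hbd _
  intro x
  rcases eq_or_ne x 0 with rfl | hx
  · simp
  · have hxE : ((WithLp.equiv 2 (Fin n → ℝ)).symm x : EuclideanSpace ℝ (Fin n)) ≠ 0 := by
      intro h; exact hx (congrArg (WithLp.equiv 2 (Fin n → ℝ)) h)
    have hle := le_ciSup hbdd ⟨(WithLp.equiv 2 (Fin n → ℝ)).symm x, hxE⟩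
    rw [← hμ] at hle
    have hx2 : (0:ℝ) < ‖((WithLp.equiv 2 (Fin n → ℝ)).symm x : EuclideanSpace ℝ (Fin n))‖ ^ 2 :=
      pow_pos (norm_pos_iff.mpr hxE) 2
    rw [RCLike.re_to_real, div_le_iff₀ hx2, hinner, hnorm] at hle
    have h3 : ∑ i, A.mulVec x i * x i ≤ μ * ∑ i, x i ^ 2 := hle
    refine h3.trans ?_
    have hsum : (0:ℝ) ≤ ∑ i, x i ^ 2 := by positivity
    exact mul_le_mul_of_nonneg_right hμle hsum

set_option maxHeartbeats 1600000 in
/-- Let `G` be a graph on `n > 10` vertices whose complement has edge density `p ≤ 1/10`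
and maximum degree `Δ̄`. If `v₁` is a nonnegative unit eigenvector for the largest
adjacency eigenvalue `lam₁`, then for every vertex `i`,
`(1 - 3Δ̄/n)/√n ≤ v₁ i ≤ (1 + 2p + 2/n)/√n`. -/
theorem principal_eigenvector_bounds {n : ℕ} (hn : 10 < n)
    (G : SimpleGraph (Fin n)) [DecidableRel G.Adj] [DecidableRel Gᶜ.Adj]
    (p : ℝ) (hpdef : p = (Gᶜ.edgeFinset.card : ℝ) / (n.choose 2)) (hple : p ≤ 1 / 10)
    (Δbar : ℕ) (hΔ : Δbar = Gᶜ.maxDegree)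
    (lam1 : ℝ) (v1 : Fin n → ℝ)
    (hv1 : (G.adjMatrix ℝ).mulVec v1 = lam1 • v1)
    (hpos : ∀ i, 0 ≤ v1 i)
    (hunit : ∑ i, (v1 i) ^ 2 = 1)
    (hmax : ∀ (μ : ℝ) (v : Fin n → ℝ), v ≠ 0 → (G.adjMatrix ℝ).mulVec v = μ • v → μ ≤ lam1) :
    ∀ i, (1 - 3 * (Δbar : ℝ) / n) / Real.sqrt n ≤ v1 i ∧
      v1 i ≤ (1 + 2 * p + 2 / n) / Real.sqrt n := by
  set N : ℝ := (n : ℝ) with hNdef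
  have hN11 : (11:ℝ) ≤ N := by
    have h11 : 11 ≤ n := hn
    rw [hNdef]
    exact_mod_cast h11
  have hN0 : (0:ℝ) < N := by linarith
  set s : ℝ := ∑ i, v1 i with hsdef
  have hs0 : 0 ≤ s := Finset.sum_nonneg fun i _ => hpos i
  have hD0 : (0:ℝ) ≤ (Δbar : ℝ) := Nat.cast_nonneg _
  -- p ≥ 0
  have hp0 : 0 ≤ p := by rw [hpdef]; positivity
  -- the adjacency matrix is Hermitian
  have hherm : (G.adjMatrix ℝ).IsHermitian := by
    show _ = _
    ext i j
    simp [Matrix.conjTranspose_apply, G.adj_comm]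
  -- quadratic form bound
  have hbd : ∀ x : Fin n → ℝ,
      ∑ i, (G.adjMatrix ℝ).mulVec x i * x i ≤ N * ∑ i, x i ^ 2 := by
    intro x
    have h1 : ∑ i, (G.adjMatrix ℝ).mulVec x i * x i ≤ ∑ i : Fin n, (∑ j, |x j|) * |x i| := by
      apply Finset.sum_le_sum
      intro i _
      rw [Matrix.mulVec, dotProduct, Finset.sum_mul, Finset.sum_mul]
      apply Finset.sum_le_sum
      intro j _
      rw [mul_assoc]
      by_cases h : G.Adj i j
      · simp only [SimpleGraph.adjMatrix_apply, if_pos h, one_mul]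
        calc x j * x i ≤ |x j * x i| := le_abs_self _
          _ = |x j| * |x i| := abs_mul _ _
      · simp only [SimpleGraph.adjMatrix_apply, if_neg h, zero_mul]
        positivity
    rw [← Finset.mul_sum] at h1
    have h2 : (∑ j, |x j|) * (∑ i, |x i|) = (∑ j, |x j|) ^ 2 := by ring
    rw [h2] at h1
    refine h1.trans ?_
    have h3 := sq_sum_le_card_mul_sum_sq (s := Finset.univ) (f := fun j => |x j|)
    simpa [sq_abs] using h3
  -- Rayleigh bound on the all-ones vector
  have hray := rayleigh_le_aux (by omega) (G.adjMatrix ℝ) hherm lam1 hmax N hbd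
    (fun _ => (1:ℝ))
  have hdeg1 : ∀ i, (G.adjMatrix ℝ).mulVec (fun _ => (1:ℝ)) i = (G.degree i : ℝ) := by
    intro i
    rw [adjMatrix_mulVec_apply]
    simp [Finset.sum_const, card_neighborFinset_eq_degree]
  have hsum_deg : ∑ i, (G.adjMatrix ℝ).mulVec (fun _ => (1:ℝ)) i * 1
      = 2 * (G.edgeFinset.card : ℝ) := by
    simp only [hdeg1, mul_one]
    rw [← Nat.cast_sum, sum_degrees_eq_twice_card_edges]
    push_cast
    ring
  -- edge counting
  have hcard : G.edgeFinset.card + Gᶜ.edgeFinset.card = n.choose 2 := by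
    classical
    have hdisj : Disjoint G.edgeFinset Gᶜ.edgeFinset :=
      (disjoint_edgeFinset).mpr disjoint_compl_right
    have hunion : G.edgeFinset ∪ Gᶜ.edgeFinset = (⊤ : SimpleGraph (Fin n)).edgeFinset := by
      ext e
      induction e with
      | _ x y =>
        simp only [Finset.mem_union, mem_edgeFinset, mem_edgeSet, compl_adj, top_adj]
        constructor
        · rintro (h | ⟨h, _⟩)
          · exact h.ne
          · exact h
        · intro h
          by_cases hadj : G.Adj x y
          · exact Or.inl hadj
          · exact Or.inr ⟨h, hadj⟩
    have hc := Finset.card_union_of_disjoint hdisj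
    rw [hunion, card_edgeFinset_top_eq_card_choose_two] at hc
    simpa [Fintype.card_fin] using hc.symm
  have hchoose : ((n.choose 2 : ℕ) : ℝ) = N * (N - 1) / 2 := Nat.cast_choose_two ℝ n
  have hchoose0 : (0:ℝ) < ((n.choose 2 : ℕ) : ℝ) := by rw [hchoose]; nlinarith only [hN11]
  have hebar : (Gᶜ.edgeFinset.card : ℝ) = p * (N * (N - 1) / 2) := by
    rw [hpdef, ← hchoose]
    field_simp
  have heG : (G.edgeFinset.card : ℝ) = (1 - p) * (N * (N - 1) / 2) := by
    have : (G.edgeFinset.card : ℝ) + (Gᶜ.edgeFinset.card : ℝ) = ((n.choose 2 : ℕ) : ℝ) := by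
      exact_mod_cast congrArg (Nat.cast : ℕ → ℝ) hcard
    rw [hebar, hchoose] at this
    linarith
  -- lam1 lower bound
  have hlamlb : (1 - p) * (N - 1) ≤ lam1 := by
    rw [hsum_deg, heG] at hray
    have hsum1 : ∑ _i : Fin n, (1:ℝ) ^ 2 = N := by simp [hNdef]
    rw [hsum1] at hray
    have h5 : (1 - p) * (N - 1) * N ≤ lam1 * N := by linear_combination hray
    exact le_of_mul_le_mul_right h5 hN0
  -- lam1 upper bound
  have hkeyA : ∀ i, lam1 * v1 i = ∑ j ∈ G.neighborFinset i, v1 j := by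
    intro i
    have h := congrFun hv1 i
    rw [adjMatrix_mulVec_apply] at h
    simpa [mul_comm] using h.symm
  have hlamub : lam1 ≤ N - 1 := by
    obtain ⟨i0, -, hmaxi⟩ := Finset.exists_max_image Finset.univ v1 ⟨⟨0, by omega⟩, Finset.mem_univ _⟩
    have hex : ∃ j, 0 < v1 j := by
      by_contra hcon
      push_neg at hcon
      have hz : ∀ j, v1 j = 0 := fun j => le_antisymm (hcon j) (hpos j)
      simp [hz] at hunit
    obtain ⟨j0, hj0⟩ := hex
    have hi0pos : 0 < v1 i0 := lt_of_lt_of_le hj0 (hmaxi j0 (Finset.mem_univ _))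
    have hdegle : (G.degree i0 : ℝ) ≤ N - 1 := by
      have h1 : G.degree i0 + 1 ≤ n := by
        have := G.degree_lt_card_verts i0
        simpa using this
      have h2 : (G.degree i0 : ℝ) + 1 ≤ N := by
        rw [hNdef]
        exact_mod_cast h1
      linarith
    have h2 : lam1 * v1 i0 ≤ (N - 1) * v1 i0 := by
      rw [hkeyA i0]
      calc ∑ j ∈ G.neighborFinset i0, v1 j ≤ ∑ _j ∈ G.neighborFinset i0, v1 i0 :=
            Finset.sum_le_sum fun j _ => hmaxi j (Finset.mem_univ _)
        _ = (G.degree i0 : ℝ) * v1 i0 := by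
            rw [Finset.sum_const, card_neighborFinset_eq_degree, nsmul_eq_mul]
        _ ≤ (N - 1) * v1 i0 := mul_le_mul_of_nonneg_right hdegle (hpos i0)
    exact le_of_mul_le_mul_right h2 hi0pos
  -- key split identity
  have hkey : ∀ i, s = v1 i + lam1 * v1 i + ∑ j ∈ Gᶜ.neighborFinset i, v1 j := by
    intro i
    rw [hkeyA i]
    have hNc : Gᶜ.neighborFinset i = (G.neighborFinset i)ᶜ \ {i} := by
      ext j
      simp only [mem_neighborFinset, compl_adj, Finset.mem_sdiff, Finset.mem_compl,
        Finset.mem_singleton]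
      constructor
      · rintro ⟨h1, h2⟩; exact ⟨h2, fun h => h1 h.symm⟩
      · rintro ⟨h1, h2⟩; exact ⟨fun h => h2 h.symm, h1⟩
    rw [hNc]
    have h1 : ∑ j ∈ (G.neighborFinset i)ᶜ, v1 j
        = ∑ j ∈ (G.neighborFinset i)ᶜ \ {i}, v1 j + v1 i := by
      refine Finset.sum_eq_sum_sdiff_singleton_add ?_ _
      simp [Finset.mem_compl]
    have h2 := Finset.sum_add_sum_compl (G.neighborFinset i) v1
    rw [h1] at h2
    rw [hsdef]
    linarith
  set t : ℝ := lam1 + 1 with htdef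
  have hplb : p * (N - 1) ≤ (1/10) * (N - 1) :=
    mul_le_mul_of_nonneg_right hple (by linarith)
  have htlb : N - p * (N - 1) ≤ t := by
    have hx : (1 - p) * (N - 1) = N - 1 - p * (N - 1) := by ring
    rw [htdef]
    linarith [hlamlb]
  have htN3 : N / 3 ≤ t := by linarith [hplb, htlb]
  have htpos : 0 < t := by linarith [htN3]
  have htubN : t ≤ N := by rw [htdef]; linarith
  -- upper bound on each coordinate : (lam1+1) v1 i ≤ s
  have hub1 : ∀ i, t * v1 i ≤ s := by
    intro i
    have h := hkey i
    have h2 : 0 ≤ ∑ j ∈ Gᶜ.neighborFinset i, v1 j :=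
      Finset.sum_nonneg fun j _ => hpos j
    rw [htdef]
    nlinarith only [h, h2]
  have hMub : ∀ j, v1 j ≤ s / t := fun j => (le_div_iff₀' htpos).mpr (hub1 j)
  -- complement neighbor sum bound
  have hdegc : ∀ i, ((Gᶜ.neighborFinset i).card : ℝ) ≤ (Δbar : ℝ) := by
    intro i
    have h1 : Gᶜ.degree i ≤ Gᶜ.maxDegree := Gᶜ.degree_le_maxDegree i
    rw [card_neighborFinset_eq_degree]
    exact_mod_cast hΔ ▸ h1
  have hNbar : ∀ i, ∑ j ∈ Gᶜ.neighborFinset i, v1 j ≤ (Δbar : ℝ) * (s / t) := by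
    intro i
    calc ∑ j ∈ Gᶜ.neighborFinset i, v1 j ≤ ∑ _j ∈ Gᶜ.neighborFinset i, s / t :=
          Finset.sum_le_sum fun j _ => hMub j
      _ = ((Gᶜ.neighborFinset i).card : ℝ) * (s / t) := by
          rw [Finset.sum_const, nsmul_eq_mul]
      _ ≤ (Δbar : ℝ) * (s / t) :=
          mul_le_mul_of_nonneg_right (hdegc i) (div_nonneg hs0 htpos.le)
  -- s bounds
  have hsub : s ≤ Real.sqrt N := by
    have h1 : s ^ 2 ≤ N := by
      have h2 := sq_sum_le_card_mul_sum_sq (s := Finset.univ) (f := v1)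
      rw [hunit] at h2
      simpa [hsdef] using h2
    have := Real.sqrt_le_sqrt h1
    rwa [Real.sqrt_sq hs0] at this
  have hslb : Real.sqrt t ≤ s := by
    have h1 : t ≤ s ^ 2 := by
      have h2 : ∀ i, t * v1 i ^ 2 ≤ v1 i * s := by
        intro i
        have hx := mul_le_mul_of_nonneg_right (hub1 i) (hpos i)
        nlinarith only [hx]
      have h3 : ∑ i, t * v1 i ^ 2 ≤ ∑ i, v1 i * s :=
        Finset.sum_le_sum fun i _ => h2 i
      rw [← Finset.mul_sum, hunit, mul_one, ← Finset.sum_mul] at h3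
      nlinarith only [h3]
    have := Real.sqrt_le_sqrt h1
    rwa [Real.sqrt_sq hs0] at this
  have hsqrtN0 : 0 < Real.sqrt N := Real.sqrt_pos.mpr hN0
  have hsqrtNsq : Real.sqrt N * Real.sqrt N = N := Real.mul_self_sqrt hN0.le
  intro i
  constructor
  · -- lower bound
    by_cases hcase : 1 - 3 * (Δbar : ℝ) / N ≤ 0
    · have : (1 - 3 * (Δbar : ℝ) / N) / Real.sqrt N ≤ 0 :=
        div_nonpos_iff.mpr (Or.inr ⟨hcase, hsqrtN0.le⟩)
      exact this.trans (hpos i)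
    · push_neg at hcase
      have hDN3 : 3 * (Δbar : ℝ) < N := by
        have h1 : 3 * (Δbar : ℝ) / N < 1 := by linarith
        calc 3 * (Δbar : ℝ) = (3 * (Δbar:ℝ) / N) * N := by field_simp
          _ < 1 * N := by exact mul_lt_mul_of_pos_right h1 hN0
          _ = N := one_mul N
      have htD : (0:ℝ) ≤ t - (Δbar : ℝ) := by linarith [hDN3, htN3]
      -- t * v1 i ≥ s - Δbar * s / t
      have hlow : s - (Δbar : ℝ) * (s / t) ≤ t * v1 i := by
        have h := hkey i
        have h2 := hNbar i
        rw [htdef]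
        nlinarith only [h, h2, hpos i]
      have hv1i : s * (t - (Δbar:ℝ)) / t ^ 2 ≤ v1 i := by
        rw [div_le_iff₀ (by positivity)]
        have hexp : s - (Δbar : ℝ) * (s / t) = s * (t - (Δbar:ℝ)) / t := by
          field_simp
        rw [hexp] at hlow
        calc s * (t - (Δbar:ℝ)) = (s * (t - (Δbar:ℝ)) / t) * t := by field_simp
          _ ≤ (t * v1 i) * t := mul_le_mul_of_nonneg_right hlow htpos.le
          _ = v1 i * t ^ 2 := by ring
      have hstep : Real.sqrt t * (t - (Δbar:ℝ)) / t ^ 2 ≤ s * (t - (Δbar:ℝ)) / t ^ 2 := by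
        gcongr
      refine le_trans ?_ (hstep.trans hv1i)
      -- (1 - 3D/N)/√N ≤ √t (t - D)/t²
      rw [div_le_div_iff₀ hsqrtN0 (by positivity)]
      have hu0 : 0 ≤ Real.sqrt t := Real.sqrt_nonneg t
      have huu : Real.sqrt t * Real.sqrt t = t := Real.mul_self_sqrt htpos.le
      have hur : Real.sqrt t ≤ Real.sqrt N := Real.sqrt_le_sqrt htubN
      have e1 : t * (t - (Δbar:ℝ)) ≤ Real.sqrt t * (t - (Δbar:ℝ)) * Real.sqrt N := by
        have e1' : Real.sqrt t * (t - (Δbar:ℝ)) * Real.sqrt t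
            ≤ Real.sqrt t * (t - (Δbar:ℝ)) * Real.sqrt N :=
          mul_le_mul_of_nonneg_left hur (mul_nonneg hu0 htD)
        have e1'' : t * (t - (Δbar:ℝ)) = Real.sqrt t * (t - (Δbar:ℝ)) * Real.sqrt t := by
          linear_combination ((Δbar:ℝ) - t) * huu
        linarith [e1', e1'']
      have hDt : (Δbar:ℝ) * t ≤ 3 * (Δbar:ℝ) * t ^ 2 / N := by
        rw [le_div_iff₀ hN0]
        nlinarith only [mul_nonneg (mul_nonneg hD0 htpos.le)
          (by linarith [htN3] : (0:ℝ) ≤ 3 * t - N)]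
      have e2 : (1 - 3 * (Δbar : ℝ) / N) * t ^ 2 ≤ t * (t - (Δbar:ℝ)) := by
        have hexp2 : (1 - 3 * (Δbar : ℝ) / N) * t ^ 2 = t ^ 2 - 3 * (Δbar:ℝ) * t ^ 2 / N := by
          ring
        rw [hexp2]
        linarith [hDt]
      exact le_trans e2 e1
  · -- upper bound
    have h1 : v1 i ≤ s / t := hMub i
    have h2 : s / t ≤ Real.sqrt N / t := by gcongr
    have h3 : Real.sqrt N / t ≤ (1 + 2 * p + 2 / N) / Real.sqrt N := by
      rw [div_le_div_iff₀ htpos hsqrtN0]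
      have key : N * N ≤ t * (N + 2 * p * N + 2) := by
        have hf0 : (0:ℝ) ≤ N + 2 * p * N + 2 := by nlinarith only [hp0, hN11]
        have hm : (N - p * (N - 1)) * (N + 2 * p * N + 2) ≤ t * (N + 2 * p * N + 2) :=
          mul_le_mul_of_nonneg_right htlb hf0
        have hpoly : N * N ≤ (N - p * (N - 1)) * (N + 2 * p * N + 2) := by
          nlinarith only [mul_nonneg (mul_nonneg (mul_nonneg hp0 hN0.le) hN0.le)
              (by linarith : (0:ℝ) ≤ 1 - 2 * p),
            mul_nonneg (mul_nonneg hp0 hp0) hN0.le,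
            mul_nonneg hp0 hN0.le, hp0, hN11, hple]
        linarith [hm, hpoly]
      have hexp3 : (1 + 2 * p + 2 / N) * t = t * (N + 2 * p * N + 2) / N := by
        field_simp
      rw [hsqrtNsq, hexp3, le_div_iff₀ hN0]
      nlinarith only [key, hN0]
    exact h1.trans (h2.trans h3)
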